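/- arXiv:1801.03319 — 3 statements merged into one kernel-verified Lean document; each statement's English description precedes it below -/
import Mathlib

section
/- Let X_n = (x_{jk}) be an m×n random matrix whose entries are i.i.d. complex variables with mean zero, variance one, and E|x_{11}|^{6+δ} = μ < ∞ for some 0<δ<1; let B_n = (b_{jk}) be p×m with b_j = (Σ_{l=1}^p |b_{lj}|²)^{1/2} ≤ C_1 for all j and Σ_{k=1}^m b_k² ≤ C_2 p, and p/n → c ∈ (0,∞). Define the truncated matrix hat-X_n = (hat-x_{jk}) with hat-x_{jk} = x_{jk}·1(|x_{jk}| ≤ n^{1/2−η}/b_j), where η = (δ/6)/(6+δ). Then P( X_n ≠ hat-X_n infinitely often ) = 0; in fact Σ_n P(X_n ≠ hat-X_n) < ∞. -/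
open MeasureTheory ProbabilityTheory Filter Matrix Set
open scoped Topology Matrix.Norms.L2Operator

lemma markov_aux {ν : Measure ℂ} (r T I : ℝ) (hr : 0 ≤ r) (hT : 0 < T)
    (hint : Integrable (fun z : ℂ => ‖z‖ ^ r) ν) (hI : ∫ z, ‖z‖ ^ r ∂ν = I) :
    ν {z | T < ‖z‖} ≤ ENNReal.ofReal (I / T ^ r) := by
  have hTr : 0 < T ^ r := Real.rpow_pos_of_pos hT r
  have hmeas : AEMeasurable (fun z : ℂ => ENNReal.ofReal (‖z‖ ^ r)) ν :=
    ((measurable_norm.pow_const r).ennreal_ofReal).aemeasurable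
  have key := mul_meas_ge_le_lintegral₀ hmeas (ENNReal.ofReal (T ^ r))
  have hlin : ∫⁻ z, ENNReal.ofReal (‖z‖ ^ r) ∂ν = ENNReal.ofReal I := by
    rw [← ofReal_integral_eq_lintegral_ofReal hint
      (Filter.Eventually.of_forall fun z => Real.rpow_nonneg (norm_nonneg z) r), hI]
  have hsub : {z : ℂ | T < ‖z‖} ⊆ {z : ℂ | ENNReal.ofReal (T ^ r) ≤ ENNReal.ofReal (‖z‖ ^ r)} :=
    fun z hz => ENNReal.ofReal_le_ofReal (Real.rpow_le_rpow hT.le (le_of_lt hz) hr)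
  calc ν {z | T < ‖z‖} ≤ ν {z : ℂ | ENNReal.ofReal (T ^ r) ≤ ENNReal.ofReal (‖z‖ ^ r)} :=
        measure_mono hsub
    _ ≤ ENNReal.ofReal I / ENNReal.ofReal (T ^ r) := by
        rw [ENNReal.le_div_iff_mul_le (Or.inl (by simpa using hTr)) (Or.inl ENNReal.ofReal_ne_top)]
        rw [mul_comm]
        exact key.trans hlin.le
    _ = ENNReal.ofReal (I / T ^ r) := (ENNReal.ofReal_div_of_pos hTr).symm

/-- **Truncation step.**  Let `X_n` have i.i.d. complex entries with mean `0`, variance `1`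
and `E|x_{11}|^{6+δ} = μ₆ < ∞`, let `B_n` be `p×m` with column norms `b_j ≤ C₁` and
`∑_k b_k² ≤ C₂ p`, and `p/n → c ∈ (0,∞)`.  Let `X̂_n` be obtained from `X_n` by truncating
each entry at level `n^{1/2-η}/b_j`, `η = (δ/6)/(6+δ)`.  Then
`∑_n P(X_n ≠ X̂_n) < ∞`, and hence `P(X_n ≠ X̂_n infinitely often) = 0`. -/
theorem truncation_borel_cantelli
    {Ω : Type*} [MeasurableSpace Ω] (μ : Measure Ω) [IsProbabilityMeasure μ]
    (p m : ℕ → ℕ) (c : ℝ) (hc : 0 < c)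
    (hcn : Tendsto (fun n => (p n : ℝ) / n) atTop (𝓝 c))
    (δ : ℝ) (hδ0 : 0 < δ) (hδ1 : δ < 1)
    (η : ℝ) (hη : η = δ / 6 / (6 + δ))
    (X : ∀ n, Ω → Matrix (Fin (m n)) (Fin n) ℂ)
    (ν : Measure ℂ) [IsProbabilityMeasure ν]
    (hXmeas : ∀ n j k, Measurable fun ω => X n ω j k)
    (hXlaw : ∀ n j k, Measure.map (fun ω => X n ω j k) μ = ν)
    (hXindep : ∀ n, iIndepFun
      (fun jk : Fin (m n) × Fin n => fun ω => X n ω jk.1 jk.2) μ)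
    (hmean : ∫ z, z ∂ν = 0) (hvar : ∫ z, ‖z‖ ^ 2 ∂ν = 1)
    (μ₆ : ℝ) (hmom : ∫ z, ‖z‖ ^ ((6 : ℝ) + δ) ∂ν = μ₆)
    (hmomint : Integrable (fun z : ℂ => ‖z‖ ^ ((6 : ℝ) + δ)) ν)
    (B : ∀ n, Matrix (Fin (p n)) (Fin (m n)) ℂ)
    (bcol : ∀ n, Fin (m n) → ℝ)
    (hbcol : ∀ n j, bcol n j = Real.sqrt (∑ l, ‖B n l j‖ ^ 2))
    (C₁ C₂ : ℝ)
    (hb1 : ∀ n j, bcol n j ≤ C₁)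
    (hb2 : ∀ n, ∑ k, bcol n k ^ 2 ≤ C₂ * p n)
    (Xh : ∀ n, Ω → Matrix (Fin (m n)) (Fin n) ℂ)
    (hXh : ∀ n ω j k, Xh n ω j k =
      if ‖X n ω j k‖ * bcol n j ≤ (n : ℝ) ^ ((1 : ℝ) / 2 - η) then X n ω j k else 0) :
    (∑' n, μ {ω | X n ω ≠ Xh n ω}) ≠ ⊤ ∧
      μ (Filter.limsup (fun n => {ω | X n ω ≠ Xh n ω}) atTop) = 0 := by
  have h6δ : (0:ℝ) < 6 + δ := by linarith
  have hμ₆ : 0 ≤ μ₆ := by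
    rw [← hmom]; exact integral_nonneg fun z => Real.rpow_nonneg (norm_nonneg z) _
  have hexp : ((1:ℝ)/2 - η) * (6 + δ) = 3 + δ/3 := by
    subst hη; field_simp; ring
  set C₁' : ℝ := max C₁ 0 with hC₁'
  have hC₁'0 : 0 ≤ C₁' := le_max_right _ _
  have hbnn : ∀ n j, 0 ≤ bcol n j := fun n j => by rw [hbcol]; exact Real.sqrt_nonneg _
  have hC₂ : 0 ≤ C₂ := by
    obtain ⟨n, hn⟩ := (hcn.eventually (eventually_gt_nhds hc)).exists
    have hpn : 0 < (p n : ℝ) := by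
      by_contra h
      push_neg at h
      have h0 : (p n : ℝ) = 0 := le_antisymm h (Nat.cast_nonneg _)
      rw [h0, zero_div] at hn
      exact lt_irrefl _ hn
    have h0 : (0:ℝ) ≤ ∑ k, bcol n k ^ 2 :=
      Finset.sum_nonneg fun k _ => sq_nonneg _
    nlinarith [hb2 n]
  set D : ℝ := μ₆ * C₁' ^ ((4:ℝ) + δ) * C₂ with hD
  have hD0 : 0 ≤ D := mul_nonneg (mul_nonneg hμ₆ (Real.rpow_nonneg hC₁'0 _)) hC₂
  set K : ℝ := D * (c + 1) with hK
  have hK0 : 0 ≤ K := mul_nonneg hD0 (by linarith)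
  set g : ℕ → ℝ := fun n => K * (n:ℝ) ^ (-(1 + δ/3)) with hg
  have hgsum : Summable g := (Real.summable_nat_rpow.mpr (by linarith)).mul_left K
  have hg0 : ∀ n, 0 ≤ g n := fun n => mul_nonneg hK0 (Real.rpow_nonneg (Nat.cast_nonneg n) _)
  -- main per-n bound
  have main : ∀ n : ℕ, 1 ≤ n → (p n : ℝ) / n < c + 1 →
      μ {ω | X n ω ≠ Xh n ω} ≤ ENNReal.ofReal (g n) := by
    intro n hn hpn
    have hn0 : (0:ℝ) < n := by exact_mod_cast hn
    set T : ℝ := (n:ℝ) ^ ((1:ℝ)/2 - η) with hT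
    have hT0 : 0 < T := Real.rpow_pos_of_pos hn0 _
    have hTr : T ^ ((6:ℝ) + δ) = (n:ℝ) ^ ((3:ℝ) + δ/3) := by
      rw [← Real.rpow_mul hn0.le, hexp]
    set S : Fin (m n) × Fin n → Set Ω :=
      fun jk => {ω | T < ‖X n ω jk.1 jk.2‖ * bcol n jk.1} with hS
    have hsub : {ω | X n ω ≠ Xh n ω} ⊆ ⋃ jk : Fin (m n) × Fin n, S jk := by
      intro ω hω
      by_contra hcon
      simp only [Set.mem_iUnion, not_exists] at hcon
      apply hω
      ext j k
      rw [hXh n ω j k, if_pos]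
      have h2 := hcon (j, k)
      simp only [hS, Set.mem_setOf_eq] at h2
      exact not_lt.mp h2
    have entry : ∀ jk : Fin (m n) × Fin n,
        μ (S jk) ≤ ENNReal.ofReal (μ₆ * bcol n jk.1 ^ ((6:ℝ) + δ) / T ^ ((6:ℝ) + δ)) := by
      rintro ⟨j, k⟩
      rcases eq_or_lt_of_le (hbnn n j) with hb | hb
      · have hemp : S (j, k) = ∅ := by
          ext ω
          simp [hS, ← hb, hT0.not_gt]
        rw [hemp, measure_empty]
        exact zero_le
      · have hpre : S (j,k) = (fun ω => X n ω j k) ⁻¹' {z : ℂ | T / bcol n j < ‖z‖} := by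
          ext ω
          simp only [hS, Set.mem_setOf_eq, Set.mem_preimage]
          rw [div_lt_iff₀ hb]
        have hEm : MeasurableSet {z : ℂ | T / bcol n j < ‖z‖} :=
          measurableSet_lt measurable_const measurable_norm
        have hmap : μ (S (j,k)) = ν {z : ℂ | T / bcol n j < ‖z‖} := by
          rw [hpre, ← hXlaw n j k, Measure.map_apply (hXmeas n j k) hEm]
        rw [hmap]
        refine (markov_aux ((6:ℝ) + δ) (T / bcol n j) μ₆ h6δ.le (div_pos hT0 hb)
          hmomint hmom).trans (le_of_eq ?_)
        congr 1
        rw [Real.div_rpow hT0.le (hbnn n j), div_div_eq_mul_div]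
    have step1 : μ {ω | X n ω ≠ Xh n ω} ≤ ∑ jk : Fin (m n) × Fin n, μ (S jk) :=
      (measure_mono hsub).trans ((measure_iUnion_le S).trans (by rw [tsum_fintype]))
    have step2 : (∑ jk : Fin (m n) × Fin n, μ (S jk))
        ≤ ENNReal.ofReal (∑ jk : Fin (m n) × Fin n,
            μ₆ * bcol n jk.1 ^ ((6:ℝ) + δ) / T ^ ((6:ℝ) + δ)) := by
      rw [ENNReal.ofReal_sum_of_nonneg (fun jk _ =>
        div_nonneg (mul_nonneg hμ₆ (Real.rpow_nonneg (hbnn n jk.1) _))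
          (Real.rpow_nonneg hT0.le _))]
      exact Finset.sum_le_sum fun jk _ => entry jk
    -- the real-number estimate
    have hreal : (∑ jk : Fin (m n) × Fin n,
        μ₆ * bcol n jk.1 ^ ((6:ℝ) + δ) / T ^ ((6:ℝ) + δ)) ≤ g n := by
      have hbr : ∀ j : Fin (m n),
          bcol n j ^ ((6:ℝ) + δ) ≤ C₁' ^ ((4:ℝ) + δ) * bcol n j ^ 2 := by
        intro j
        rcases eq_or_lt_of_le (hbnn n j) with hb | hb
        · rw [← hb, Real.zero_rpow h6δ.ne']
          positivity
        · have h1 : bcol n j ^ ((6:ℝ) + δ) = bcol n j ^ ((4:ℝ) + δ) * bcol n j ^ (2:ℝ) := by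
            rw [← Real.rpow_add hb]; congr 1; ring
          have h2 : bcol n j ^ (2:ℝ) = bcol n j ^ 2 := by
            rw [show ((2:ℝ)) = ((2:ℕ):ℝ) by norm_num, Real.rpow_natCast]
          rw [h1, h2]
          exact mul_le_mul_of_nonneg_right
            (Real.rpow_le_rpow (hbnn n j) ((hb1 n j).trans (le_max_left _ _)) (by linarith))
            (sq_nonneg _)
      have hsum2 : (∑ j : Fin (m n), μ₆ * bcol n j ^ ((6:ℝ) + δ)) ≤ D * p n := by
        calc (∑ j : Fin (m n), μ₆ * bcol n j ^ ((6:ℝ) + δ))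
            ≤ ∑ j : Fin (m n), μ₆ * (C₁' ^ ((4:ℝ) + δ) * bcol n j ^ 2) :=
              Finset.sum_le_sum fun j _ => mul_le_mul_of_nonneg_left (hbr j) hμ₆
          _ = μ₆ * C₁' ^ ((4:ℝ) + δ) * ∑ j : Fin (m n), bcol n j ^ 2 := by
              rw [Finset.mul_sum]
              exact Finset.sum_congr rfl fun j _ => by ring
          _ ≤ μ₆ * C₁' ^ ((4:ℝ) + δ) * (C₂ * p n) :=
              mul_le_mul_of_nonneg_left (hb2 n)
                (mul_nonneg hμ₆ (Real.rpow_nonneg hC₁'0 _))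
          _ = D * p n := by rw [hD]; ring
      have hsum1 : (∑ jk : Fin (m n) × Fin n,
          μ₆ * bcol n jk.1 ^ ((6:ℝ) + δ) / T ^ ((6:ℝ) + δ))
          = (n : ℝ) * ((∑ j : Fin (m n), μ₆ * bcol n j ^ ((6:ℝ) + δ)) / T ^ ((6:ℝ) + δ)) := by
        rw [Fintype.sum_prod_type, Finset.sum_div, Finset.mul_sum]
        exact Finset.sum_congr rfl fun j _ => by
          simp [Finset.sum_const, Finset.card_univ, nsmul_eq_mul]
      have hnr : (0:ℝ) < (n:ℝ) ^ ((3:ℝ) + δ/3) := Real.rpow_pos_of_pos hn0 _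
      have hple : (p n : ℝ) ≤ (c + 1) * n := le_of_lt ((div_lt_iff₀ hn0).mp hpn)
      have h2n : (n:ℝ) * (n:ℝ) = (n:ℝ) ^ (2:ℝ) := by
        rw [show ((2:ℝ)) = ((2:ℕ):ℝ) by norm_num, Real.rpow_natCast]; ring
      have h2 : (n:ℝ) ^ (2:ℝ) / (n:ℝ) ^ ((3:ℝ) + δ/3) = (n:ℝ) ^ (-(1 + δ/3)) := by
        rw [← Real.rpow_sub hn0]
        congr 1; ring
      rw [hsum1, hTr]
      calc (n:ℝ) * ((∑ j : Fin (m n), μ₆ * bcol n j ^ ((6:ℝ) + δ)) / (n:ℝ) ^ ((3:ℝ) + δ/3))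
          ≤ (n:ℝ) * ((D * ((c + 1) * n)) / (n:ℝ) ^ ((3:ℝ) + δ/3)) := by
            gcongr
            exact hsum2.trans (mul_le_mul_of_nonneg_left hple hD0)
        _ = (D * (c + 1)) * (((n:ℝ) * (n:ℝ)) / (n:ℝ) ^ ((3:ℝ) + δ/3)) := by ring
        _ = K * (n:ℝ) ^ (-(1 + δ/3)) := by rw [hK, h2n, h2]
    refine step1.trans (step2.trans ?_)
    exact ENNReal.ofReal_le_ofReal hreal
  -- assemble
  obtain ⟨N, hN⟩ := eventually_atTop.mp (hcn.eventually (eventually_lt_nhds (lt_add_one c)))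
  set N' : ℕ := max N 1 with hN'
  have hbound : ∀ n, μ {ω | X n ω ≠ Xh n ω}
      ≤ ENNReal.ofReal (g n) + (if n < N' then 1 else 0) := by
    intro n
    by_cases h : n < N'
    · rw [if_pos h]
      exact le_add_self.trans' prob_le_one
    · rw [if_neg h, add_zero]
      push_neg at h
      exact main n (le_trans (le_max_right _ _) h) (hN n (le_trans (le_max_left _ _) h))
  have hsum : (∑' n, μ {ω | X n ω ≠ Xh n ω}) ≠ ⊤ := by
    refine ne_top_of_le_ne_top ?_ (ENNReal.tsum_le_tsum hbound)
    rw [ENNReal.tsum_add]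
    refine ENNReal.add_ne_top.mpr ⟨?_, ?_⟩
    · rw [← ENNReal.ofReal_tsum_of_nonneg hg0 hgsum]
      exact ENNReal.ofReal_ne_top
    · rw [tsum_eq_sum (s := Finset.range N')
        (fun b hb => if_neg (by simpa [Finset.mem_range] using hb))]
      exact (ENNReal.sum_lt_top.mpr fun a _ => by split <;> simp).ne
  exact ⟨hsum, measure_limsup_atTop_eq_zero hsum⟩
end

section
/- Let hat-X_n = (hat-x_{jk}) be the m×n truncated matrix with hat-x_{jk} = x_{jk}·1(|x_{jk}| ≤ n^{1/2−η}/b_j), where the x_{jk} are i.i.d. complex with mean zero, variance one and E|x_{11}|^{6+δ} = μ < ∞ for some 0<δ<1, η = (δ/6)/(6+δ), B_n is p×m with column norms b_j ≤ C_1 and Σ_k b_k² ≤ C_2 p, and p/n → c ∈ (0,∞). Let λ_k and hat-λ_k denote (in decreasing order) the k-th eigenvalues of (1/n) B_n hat-X_n hat-X_n* B_n* and of (1/n) B_n (hat-X_n − E hat-X_n)(hat-X_n − E hat-X_n)* B_n* respectively. Then max_{k ≤ n} | λ_k^{1/2} − hat-λ_k^{1/2} | ≤ C n^{−3/2} for a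 constant C not depending on n. -/
open MeasureTheory ProbabilityTheory Filter Matrix Set
open scoped Topology Matrix.Norms.L2Operator

/-- The `k`-th largest eigenvalue (`k = 0` is the largest) of a Hermitian matrix. -/
noncomputable def kthLargest {p : ℕ} {A : Matrix (Fin p) (Fin p) ℂ}
    (hA : A.IsHermitian) (k : Fin p) : ℝ :=
  (hA.eigenvalues ∘ Tuple.sort hA.eigenvalues) k.rev

open scoped InnerProductSpace

namespace CentralAux

variable {p q : ℕ}

lemma repr_zero_of_not_mem {A : Matrix (Fin p) (Fin p) ℂ} (hA : A.IsHermitian)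
    (T : Finset (Fin p)) {x : EuclideanSpace ℂ (Fin p)}
    (hx : x ∈ Submodule.span ℂ (hA.eigenvectorBasis '' ↑T)) {s : Fin p} (hs : s ∉ T) :
    hA.eigenvectorBasis.repr x s = 0 := by
  rw [hA.eigenvectorBasis.repr_apply_apply]
  induction hx using Submodule.span_induction with
  | mem y hy =>
    obtain ⟨t, ht, rfl⟩ := hy
    exact hA.eigenvectorBasis.orthonormal.2 (fun h => hs (h ▸ ht))
  | zero => simp
  | add y z _ _ hy hz => rw [inner_add_right, hy, hz, add_zero]
  | smul c y _ hy => rw [inner_smul_right, hy, mul_zero]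

lemma toEuclideanLin_eigenvectorBasis {A : Matrix (Fin p) (Fin p) ℂ} (hA : A.IsHermitian)
    (s : Fin p) :
    Matrix.toEuclideanLin A (hA.eigenvectorBasis s) = hA.eigenvalues s • hA.eigenvectorBasis s :=
  congrArg (WithLp.equiv 2 (Fin p → ℂ)).symm (hA.mulVec_eigenvectorBasis s)

lemma quad_formula {A : Matrix (Fin p) (Fin p) ℂ} (hA : A.IsHermitian)
    (x : EuclideanSpace ℂ (Fin p)) :
    RCLike.re (⟪x, Matrix.toEuclideanLin A x⟫_ℂ)
      = ∑ s, hA.eigenvalues s * ‖hA.eigenvectorBasis.repr x s‖ ^ 2 := by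
  classical
  have hreprL : ∀ t, hA.eigenvectorBasis.repr (Matrix.toEuclideanLin A x) t
      = (hA.eigenvalues t : ℂ) * hA.eigenvectorBasis.repr x t := by
    intro t
    conv_lhs => rw [← hA.eigenvectorBasis.sum_repr x]
    rw [map_sum]
    simp only [_root_.map_smul, toEuclideanLin_eigenvectorBasis]
    rw [map_sum, WithLp.ofLp_sum, Finset.sum_apply]
    simp only [RCLike.real_smul_eq_coe_smul (K := ℂ), _root_.map_smul, OrthonormalBasis.repr_self]
    simp [EuclideanSpace.single_apply, Complex.real_smul, mul_comm]
  rw [← hA.eigenvectorBasis.repr.inner_map_map x (Matrix.toEuclideanLin A x), PiLp.inner_apply]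
  rw [map_sum]
  refine Finset.sum_congr rfl fun s _ => ?_
  simp only [RCLike.inner_apply]
  rw [hreprL, show (hA.eigenvalues s : ℂ) * hA.eigenvectorBasis.repr x s
        * (starRingEnd ℂ) (hA.eigenvectorBasis.repr x s)
      = (hA.eigenvalues s : ℂ) * ((starRingEnd ℂ) (hA.eigenvectorBasis.repr x s)
        * hA.eigenvectorBasis.repr x s) by ring, RCLike.conj_mul]
  simp [RCLike.re_to_complex, ← Complex.ofReal_pow, Complex.ofReal_re]

lemma parseval {A : Matrix (Fin p) (Fin p) ℂ} (hA : A.IsHermitian)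
    (x : EuclideanSpace ℂ (Fin p)) :
    ‖x‖ ^ 2 = ∑ s, ‖hA.eigenvectorBasis.repr x s‖ ^ 2 := by
  rw [← hA.eigenvectorBasis.repr.norm_map x, EuclideanSpace.norm_eq,
    Real.sq_sqrt (Finset.sum_nonneg fun i _ => sq_nonneg _)]

lemma sum_restrict {A : Matrix (Fin p) (Fin p) ℂ} (hA : A.IsHermitian)
    (T : Finset (Fin p)) {x : EuclideanSpace ℂ (Fin p)}
    (hx : x ∈ Submodule.span ℂ (hA.eigenvectorBasis '' ↑T)) (f : Fin p → ℝ) :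
    ∑ s, f s * ‖hA.eigenvectorBasis.repr x s‖ ^ 2
      = ∑ s ∈ T, f s * ‖hA.eigenvectorBasis.repr x s‖ ^ 2 :=
  (Finset.sum_subset (Finset.subset_univ T)
    (fun s _ hs => by rw [repr_zero_of_not_mem hA T hx hs]; simp)).symm

lemma quad_ge_of_mem_span {A : Matrix (Fin p) (Fin p) ℂ} (hA : A.IsHermitian)
    (T : Finset (Fin p)) (r : ℝ) (hr : ∀ s ∈ T, r ≤ hA.eigenvalues s)
    {x : EuclideanSpace ℂ (Fin p)}
    (hx : x ∈ Submodule.span ℂ (hA.eigenvectorBasis '' ↑T)) :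
    r * ‖x‖ ^ 2 ≤ RCLike.re (⟪x, Matrix.toEuclideanLin A x⟫_ℂ) := by
  rw [quad_formula hA x, parseval hA x]
  have h1 : ∑ s, ‖hA.eigenvectorBasis.repr x s‖ ^ 2
      = ∑ s ∈ T, ‖hA.eigenvectorBasis.repr x s‖ ^ 2 := by
    simpa using sum_restrict hA T hx 1
  rw [h1, sum_restrict hA T hx, Finset.mul_sum]
  exact Finset.sum_le_sum fun s hs => mul_le_mul_of_nonneg_right (hr s hs) (sq_nonneg _)

lemma quad_le_of_mem_span {A : Matrix (Fin p) (Fin p) ℂ} (hA : A.IsHermitian)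
    (T : Finset (Fin p)) (r : ℝ) (hr : ∀ s ∈ T, hA.eigenvalues s ≤ r)
    {x : EuclideanSpace ℂ (Fin p)}
    (hx : x ∈ Submodule.span ℂ (hA.eigenvectorBasis '' ↑T)) :
    RCLike.re (⟪x, Matrix.toEuclideanLin A x⟫_ℂ) ≤ r * ‖x‖ ^ 2 := by
  rw [quad_formula hA x, parseval hA x]
  have h1 : ∑ s, ‖hA.eigenvectorBasis.repr x s‖ ^ 2
      = ∑ s ∈ T, ‖hA.eigenvectorBasis.repr x s‖ ^ 2 := by
    simpa using sum_restrict hA T hx 1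
  rw [h1, sum_restrict hA T hx, Finset.mul_sum]
  exact Finset.sum_le_sum fun s hs => mul_le_mul_of_nonneg_right (hr s hs) (sq_nonneg _)

lemma finrank_span_image (b : OrthonormalBasis (Fin p) ℂ (EuclideanSpace ℂ (Fin p)))
    (T : Finset (Fin p)) :
    Module.finrank ℂ (Submodule.span ℂ (⇑b '' ↑T)) = T.card := by
  have li : LinearIndependent ℂ (fun t : {x // x ∈ T} => b t) :=
    b.orthonormal.linearIndependent.comp Subtype.val Subtype.val_injective
  have h := finrank_span_eq_card li
  rw [Fintype.card_coe] at h
  have hrange : Set.range (fun t : {x // x ∈ T} => b t) = ⇑b '' ↑T := by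
    ext y; simp
  rw [hrange] at h
  exact h

lemma cf_lower {A : Matrix (Fin p) (Fin p) ℂ} (hA : A.IsHermitian) (k : Fin p) :
    ∃ V : Submodule ℂ (EuclideanSpace ℂ (Fin p)), Module.finrank ℂ V = (k : ℕ) + 1 ∧
      ∀ x ∈ V, kthLargest hA k * ‖x‖ ^ 2 ≤ RCLike.re (⟪x, Matrix.toEuclideanLin A x⟫_ℂ) := by
  classical
  refine ⟨Submodule.span ℂ (hA.eigenvectorBasis ''
      ↑((Finset.Ici k.rev).image (Tuple.sort hA.eigenvalues))), ?_, fun x hx => ?_⟩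
  · rw [finrank_span_image,
      Finset.card_image_of_injective _ (Tuple.sort hA.eigenvalues).injective,
      Fin.card_Ici, Fin.val_rev]
    have hk := k.is_lt; omega
  · refine quad_ge_of_mem_span hA _ _ (fun s hs => ?_) hx
    obtain ⟨i, hi, rfl⟩ := Finset.mem_image.mp hs
    exact Tuple.monotone_sort hA.eigenvalues (Finset.mem_Ici.mp hi)

lemma cf_upper {A : Matrix (Fin p) (Fin p) ℂ} (hA : A.IsHermitian) (k : Fin p)
    (V : Submodule ℂ (EuclideanSpace ℂ (Fin p))) (hV : Module.finrank ℂ V = (k : ℕ) + 1) :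
    ∃ x, x ∈ V ∧ x ≠ 0 ∧
      RCLike.re (⟪x, Matrix.toEuclideanLin A x⟫_ℂ) ≤ kthLargest hA k * ‖x‖ ^ 2 := by
  classical
  set W := Submodule.span ℂ (hA.eigenvectorBasis ''
      ↑((Finset.Iic k.rev).image (Tuple.sort hA.eigenvalues))) with hWdef
  have hW : Module.finrank ℂ W = p - (k : ℕ) := by
    rw [hWdef, finrank_span_image,
      Finset.card_image_of_injective _ (Tuple.sort hA.eigenvalues).injective,
      Fin.card_Iic, Fin.val_rev]
    have hk := k.is_lt; omega
  have hne : V ⊓ W ≠ ⊥ := by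
    intro hbot
    have h1 := Submodule.finrank_sup_add_finrank_inf_eq V W
    have h2 : Module.finrank ℂ ↥(V ⊔ W) ≤ p := by
      refine le_trans (Submodule.finrank_le _) ?_
      simp [finrank_euclideanSpace]
    rw [hbot, finrank_bot] at h1
    have hk := k.is_lt
    omega
  obtain ⟨x, hxVW, hx0⟩ := Submodule.exists_mem_ne_zero_of_ne_bot hne
  refine ⟨x, hxVW.1, hx0, ?_⟩
  refine quad_le_of_mem_span hA _ _ (fun s hs => ?_) hxVW.2
  obtain ⟨i, hi, rfl⟩ := Finset.mem_image.mp hs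
  exact Tuple.monotone_sort hA.eigenvalues (Finset.mem_Iic.mp hi)

lemma quad_mul_conjTranspose (A : Matrix (Fin p) (Fin q) ℂ) (x : EuclideanSpace ℂ (Fin p)) :
    RCLike.re (⟪x, Matrix.toEuclideanLin (A * Aᴴ) x⟫_ℂ)
      = ‖Matrix.toEuclideanLin Aᴴ x‖ ^ 2 := by
  have h1 : Matrix.toEuclideanLin (A * Aᴴ) x
      = Matrix.toEuclideanLin A (Matrix.toEuclideanLin Aᴴ x) := by
    rw [Matrix.toEuclideanLin_apply, Matrix.toEuclideanLin_apply, Matrix.toEuclideanLin_apply]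
    simp [Matrix.mulVec_mulVec]
  rw [h1]
  rw [← LinearMap.adjoint_inner_left]
  rw [← Matrix.toEuclideanLin_conjTranspose_eq_adjoint]
  rw [inner_self_eq_norm_sq]

section
open scoped ComplexOrder
lemma kthLargest_nonneg (A : Matrix (Fin p) (Fin q) ℂ) (h : (A * Aᴴ).IsHermitian) (k : Fin p) :
    0 ≤ kthLargest h k :=
  (Matrix.posSemidef_self_mul_conjTranspose A).eigenvalues_nonneg _
end

lemma weyl_one_sided {A₁ A₂ : Matrix (Fin p) (Fin q) ℂ}
    (h₁ : (A₁ * A₁ᴴ).IsHermitian) (h₂ : (A₂ * A₂ᴴ).IsHermitian) (k : Fin p) (ε : ℝ)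
    (hE : ∀ x : EuclideanSpace ℂ (Fin p), ‖Matrix.toEuclideanLin (A₁ - A₂)ᴴ x‖ ≤ ε * ‖x‖) :
    Real.sqrt (kthLargest h₁ k) ≤ Real.sqrt (kthLargest h₂ k) + ε := by
  obtain ⟨V, hVr, hVq⟩ := cf_lower h₁ k
  obtain ⟨x, hxV, hx0, hxq⟩ := cf_upper h₂ k V hVr
  have hxn : (0:ℝ) < ‖x‖ := norm_pos_iff.mpr hx0
  have key1 : Real.sqrt (kthLargest h₁ k) * ‖x‖ ≤ ‖Matrix.toEuclideanLin A₁ᴴ x‖ := by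
    have h := hVq x hxV
    rw [quad_mul_conjTranspose] at h
    have h' := Real.sqrt_le_sqrt h
    rwa [Real.sqrt_mul (kthLargest_nonneg A₁ h₁ k), Real.sqrt_sq (norm_nonneg x),
      Real.sqrt_sq (norm_nonneg _)] at h'
  have key2 : ‖Matrix.toEuclideanLin A₂ᴴ x‖ ≤ Real.sqrt (kthLargest h₂ k) * ‖x‖ := by
    have h := hxq
    rw [quad_mul_conjTranspose] at h
    have h' := Real.sqrt_le_sqrt h
    rwa [Real.sqrt_sq (norm_nonneg _), Real.sqrt_mul (kthLargest_nonneg A₂ h₂ k),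
      Real.sqrt_sq (norm_nonneg x)] at h'
  have key3 : ‖Matrix.toEuclideanLin A₁ᴴ x‖
      ≤ ‖Matrix.toEuclideanLin A₂ᴴ x‖ + ε * ‖x‖ := by
    have hsplit : Matrix.toEuclideanLin A₁ᴴ x
        = Matrix.toEuclideanLin A₂ᴴ x + Matrix.toEuclideanLin (A₁ - A₂)ᴴ x := by
      rw [Matrix.conjTranspose_sub, map_sub]
      simp
    rw [hsplit]
    exact (norm_add_le _ _).trans (add_le_add le_rfl (hE x))
  have hfin : Real.sqrt (kthLargest h₁ k) * ‖x‖
      ≤ (Real.sqrt (kthLargest h₂ k) + ε) * ‖x‖ := by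
    rw [add_mul]; linarith
  exact le_of_mul_le_mul_right hfin hxn

lemma weyl {A₁ A₂ : Matrix (Fin p) (Fin q) ℂ}
    (h₁ : (A₁ * A₁ᴴ).IsHermitian) (h₂ : (A₂ * A₂ᴴ).IsHermitian) (k : Fin p) (ε : ℝ)
    (hE : ∀ x : EuclideanSpace ℂ (Fin p), ‖Matrix.toEuclideanLin (A₁ - A₂)ᴴ x‖ ≤ ε * ‖x‖) :
    |Real.sqrt (kthLargest h₁ k) - Real.sqrt (kthLargest h₂ k)| ≤ ε := by
  have hE' : ∀ x : EuclideanSpace ℂ (Fin p),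
      ‖Matrix.toEuclideanLin (A₂ - A₁)ᴴ x‖ ≤ ε * ‖x‖ := by
    intro x
    have hneg : (A₂ - A₁)ᴴ = -(A₁ - A₂)ᴴ := by rw [← Matrix.conjTranspose_neg, neg_sub]
    rw [hneg, map_neg, LinearMap.neg_apply, norm_neg]
    exact hE x
  rw [abs_sub_le_iff]
  constructor
  · linarith [weyl_one_sided h₁ h₂ k ε hE]
  · linarith [weyl_one_sided h₂ h₁ k ε hE']

lemma mulVec_conjTranspose_norm_le (N : Matrix (Fin p) (Fin q) ℂ) (F : ℝ) (hF : 0 ≤ F)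
    (hFb : ∑ j, ∑ l, ‖N l j‖ ^ 2 ≤ F ^ 2) (x : EuclideanSpace ℂ (Fin p)) :
    ‖Matrix.toEuclideanLin Nᴴ x‖ ≤ F * ‖x‖ := by
  have hy : ∀ j, ‖(Matrix.toEuclideanLin Nᴴ x) j‖ ^ 2 ≤ (∑ l, ‖N l j‖ ^ 2) * ‖x‖ ^ 2 := by
    intro j
    set u : EuclideanSpace ℂ (Fin p) := (WithLp.equiv 2 (Fin p → ℂ)).symm (fun l => N l j)
      with hu
    have huapp : ∀ l, u l = N l j := fun l => rfl
    have hval : (Matrix.toEuclideanLin Nᴴ x) j = ⟪u, x⟫_ℂ := by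
      rw [Matrix.toEuclideanLin_apply]
      simp only [PiLp.inner_apply, RCLike.inner_apply, huapp]
      simp [Matrix.mulVec, dotProduct, Matrix.conjTranspose_apply, mul_comm]
    have hcs := norm_inner_le_norm (𝕜 := ℂ) u x
    have hun : ‖u‖ ^ 2 = ∑ l, ‖N l j‖ ^ 2 := by
      rw [EuclideanSpace.norm_eq, Real.sq_sqrt (Finset.sum_nonneg fun _ _ => sq_nonneg _)]
      exact Finset.sum_congr rfl fun l _ => by rw [huapp]
    calc ‖(Matrix.toEuclideanLin Nᴴ x) j‖ ^ 2
        = ‖⟪u, x⟫_ℂ‖ ^ 2 := by rw [hval]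
      _ ≤ (‖u‖ * ‖x‖) ^ 2 := by
          have h0 : (0:ℝ) ≤ ‖⟪u, x⟫_ℂ‖ := norm_nonneg _
          nlinarith
      _ = (∑ l, ‖N l j‖ ^ 2) * ‖x‖ ^ 2 := by rw [mul_pow, hun]
  have h2 : ‖Matrix.toEuclideanLin Nᴴ x‖ ^ 2 ≤ F ^ 2 * ‖x‖ ^ 2 := by
    rw [EuclideanSpace.norm_eq, Real.sq_sqrt (Finset.sum_nonneg fun _ _ => sq_nonneg _)]
    calc ∑ j, ‖(Matrix.toEuclideanLin Nᴴ x) j‖ ^ 2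
        ≤ ∑ j, (∑ l, ‖N l j‖ ^ 2) * ‖x‖ ^ 2 := Finset.sum_le_sum fun j _ => hy j
      _ = (∑ j, ∑ l, ‖N l j‖ ^ 2) * ‖x‖ ^ 2 := by rw [Finset.sum_mul]
      _ ≤ F ^ 2 * ‖x‖ ^ 2 := mul_le_mul_of_nonneg_right hFb (sq_nonneg _)
  calc ‖Matrix.toEuclideanLin Nᴴ x‖
      = Real.sqrt (‖Matrix.toEuclideanLin Nᴴ x‖ ^ 2) := (Real.sqrt_sq (norm_nonneg _)).symm
    _ ≤ Real.sqrt (F ^ 2 * ‖x‖ ^ 2) := Real.sqrt_le_sqrt h2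
    _ = F * ‖x‖ := by
        rw [show F ^ 2 * ‖x‖ ^ 2 = (F * ‖x‖) ^ 2 by ring,
          Real.sqrt_sq (mul_nonneg hF (norm_nonneg _))]

lemma trunc_mean_bound (ν : Measure ℂ) [IsProbabilityMeasure ν]
    (hmean : ∫ z, z ∂ν = 0) (δ : ℝ) (hδ0 : 0 < δ)
    (μ₆ : ℝ) (hmom : ∫ z, ‖z‖ ^ ((6:ℝ) + δ) ∂ν = μ₆)
    (hmomint : Integrable (fun z : ℂ => ‖z‖ ^ ((6:ℝ) + δ)) ν)
    (b t : ℝ) (hb : 0 ≤ b) (ht : 0 < t) :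
    ‖∫ z, (if ‖z‖ * b ≤ t then z else 0) ∂ν‖ ≤ μ₆ * (b / t) ^ ((5:ℝ) + δ) := by
  have hbt : (0:ℝ) ≤ (b / t) ^ ((5:ℝ) + δ) :=
    Real.rpow_nonneg (div_nonneg hb ht.le) _
  have hid : Integrable (fun z : ℂ => z) ν := by
    refine Integrable.mono' ((integrable_const (1:ℝ)).add hmomint)
      measurable_id.aestronglyMeasurable (Filter.Eventually.of_forall fun z => ?_)
    show ‖z‖ ≤ 1 + ‖z‖ ^ ((6:ℝ) + δ)
    rcases le_or_gt ‖z‖ 1 with h | h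
    · have : (0:ℝ) ≤ ‖z‖ ^ ((6:ℝ) + δ) := Real.rpow_nonneg (norm_nonneg _) _
      linarith
    · calc ‖z‖ = ‖z‖ ^ (1:ℝ) := (Real.rpow_one _).symm
        _ ≤ ‖z‖ ^ ((6:ℝ) + δ) := Real.rpow_le_rpow_of_exponent_le h.le (by linarith)
        _ ≤ 1 + ‖z‖ ^ ((6:ℝ) + δ) := by linarith
  have hset : MeasurableSet {z : ℂ | ‖z‖ * b ≤ t} :=
    measurableSet_le ((continuous_norm.mul continuous_const).measurable) measurable_const
  have hfmeas : Measurable fun z : ℂ => if ‖z‖ * b ≤ t then z else 0 :=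
    Measurable.ite hset measurable_id measurable_const
  have hgmeas : Measurable fun z : ℂ => if ‖z‖ * b ≤ t then (0:ℂ) else z :=
    Measurable.ite hset measurable_const measurable_id
  have hfint : Integrable (fun z : ℂ => if ‖z‖ * b ≤ t then z else 0) ν := by
    refine Integrable.mono' hid.norm hfmeas.aestronglyMeasurable
      (Filter.Eventually.of_forall fun z => ?_)
    show ‖if ‖z‖ * b ≤ t then z else 0‖ ≤ ‖z‖
    by_cases h : ‖z‖ * b ≤ t
    · rw [if_pos h]
    · rw [if_neg h]; simp
  have hgint : Integrable (fun z : ℂ => if ‖z‖ * b ≤ t then (0:ℂ) else z) ν := by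
    refine Integrable.mono' hid.norm hgmeas.aestronglyMeasurable
      (Filter.Eventually.of_forall fun z => ?_)
    show ‖if ‖z‖ * b ≤ t then (0:ℂ) else z‖ ≤ ‖z‖
    by_cases h : ‖z‖ * b ≤ t
    · rw [if_pos h]; simp
    · rw [if_neg h]
  have hsum : (∫ z, (if ‖z‖ * b ≤ t then z else 0) ∂ν)
      + (∫ z, (if ‖z‖ * b ≤ t then (0:ℂ) else z) ∂ν) = 0 := by
    rw [← integral_add hfint hgint]
    have : (fun z : ℂ => (if ‖z‖ * b ≤ t then z else 0) + (if ‖z‖ * b ≤ t then (0:ℂ) else z))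
        = fun z : ℂ => z := by
      funext z
      by_cases h : ‖z‖ * b ≤ t
      · rw [if_pos h, if_pos h, add_zero]
      · rw [if_neg h, if_neg h, zero_add]
    rw [this, hmean]
  have hptwise : ∀ z : ℂ, ‖(if ‖z‖ * b ≤ t then (0:ℂ) else z)‖
      ≤ ‖z‖ ^ ((6:ℝ) + δ) * (b / t) ^ ((5:ℝ) + δ) := by
    intro z
    by_cases h : ‖z‖ * b ≤ t
    · rw [if_pos h, norm_zero]
      exact mul_nonneg (Real.rpow_nonneg (norm_nonneg _) _) hbt
    · rw [if_neg h]
      push_neg at h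
      have hbpos : 0 < b := by
        by_contra hb0
        push_neg at hb0
        have : ‖z‖ * b ≤ 0 := mul_nonpos_of_nonneg_of_nonpos (norm_nonneg _) (le_antisymm hb0 hb ▸ le_of_eq rfl)
        linarith
      have htb : 0 < t / b := div_pos ht hbpos
      have hz : t / b < ‖z‖ := (div_lt_iff₀ hbpos).mpr (by linarith [mul_comm ‖z‖ b])
      have hzpos : 0 < ‖z‖ := lt_trans htb hz
      have hsplit : ‖z‖ = ‖z‖ ^ ((6:ℝ) + δ) * ‖z‖ ^ (-((5:ℝ) + δ)) := by
        rw [← Real.rpow_add hzpos, show (6:ℝ) + δ + -((5:ℝ) + δ) = 1 by ring, Real.rpow_one]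
      have h5 : (0:ℝ) ≤ (5:ℝ) + δ := by linarith
      refine hsplit.le.trans (mul_le_mul_of_nonneg_left ?_ (Real.rpow_nonneg (norm_nonneg _) _))
      have hmono : (t / b) ^ ((5:ℝ) + δ) ≤ ‖z‖ ^ ((5:ℝ) + δ) :=
        Real.rpow_le_rpow htb.le hz.le h5
      have hpos1 : (0:ℝ) < (t / b) ^ ((5:ℝ) + δ) := Real.rpow_pos_of_pos htb _
      calc ‖z‖ ^ (-((5:ℝ) + δ)) = (‖z‖ ^ ((5:ℝ) + δ))⁻¹ := by
            rw [Real.rpow_neg (norm_nonneg _)]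
        _ ≤ ((t / b) ^ ((5:ℝ) + δ))⁻¹ := by
            exact inv_anti₀ hpos1 hmono
        _ = (b / t) ^ ((5:ℝ) + δ) := by
            rw [← Real.inv_rpow htb.le, inv_div]
  have hbd : ‖∫ z, (if ‖z‖ * b ≤ t then (0:ℂ) else z) ∂ν‖ ≤ μ₆ * (b / t) ^ ((5:ℝ) + δ) := by
    refine (norm_integral_le_integral_norm _).trans ?_
    have hmono := integral_mono hgint.norm (hmomint.mul_const ((b / t) ^ ((5:ℝ) + δ)))
      hptwise
    rwa [integral_mul_const, hmom] at hmono
  have heq : (∫ z, (if ‖z‖ * b ≤ t then z else 0) ∂ν)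
      = -(∫ z, (if ‖z‖ * b ≤ t then (0:ℂ) else z) ∂ν) := by
    linear_combination hsum
  rw [heq, norm_neg]
  exact hbd

lemma kthLargest_congr {A B : Matrix (Fin p) (Fin p) ℂ} (h : A = B)
    (hA : A.IsHermitian) (hB : B.IsHermitian) (k : Fin p) :
    kthLargest hA k = kthLargest hB k := by subst h; rfl

end CentralAux

set_option maxHeartbeats 1000000 in
/-- **Centralization step.**  With `X̂_n` the truncated matrix (entries truncated at
`n^{1/2-η}/b_j`), let `λ_k` and `λ̂_k` denote (in decreasing order) the eigenvalues of
`(1/n) Bₙ X̂ₙ X̂ₙ* Bₙ*` and of `(1/n) Bₙ (X̂ₙ - E X̂ₙ)(X̂ₙ - E X̂ₙ)* Bₙ*`.  Then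
`max_k |λ_k^{1/2} - λ̂_k^{1/2}| ≤ C n^{-3/2}` for a constant `C` not depending on `n`. -/
theorem centralization_eigenvalue_bound
    {Ω : Type*} [MeasurableSpace Ω] (μ : Measure Ω) [IsProbabilityMeasure μ]
    (p m : ℕ → ℕ) (c : ℝ) (hc : 0 < c)
    (hcn : Tendsto (fun n => (p n : ℝ) / n) atTop (𝓝 c))
    (δ : ℝ) (hδ0 : 0 < δ) (hδ1 : δ < 1)
    (η : ℝ) (hη : η = δ / 6 / (6 + δ))
    (X : ∀ n, Ω → Matrix (Fin (m n)) (Fin n) ℂ)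
    (ν : Measure ℂ) [IsProbabilityMeasure ν]
    (hXmeas : ∀ n j k, Measurable fun ω => X n ω j k)
    (hXlaw : ∀ n j k, Measure.map (fun ω => X n ω j k) μ = ν)
    (hXindep : ∀ n, iIndepFun
      (fun jk : Fin (m n) × Fin n => fun ω => X n ω jk.1 jk.2) μ)
    (hmean : ∫ z, z ∂ν = 0) (hvar : ∫ z, ‖z‖ ^ 2 ∂ν = 1)
    (μ₆ : ℝ) (hmom : ∫ z, ‖z‖ ^ ((6 : ℝ) + δ) ∂ν = μ₆)
    (hmomint : Integrable (fun z : ℂ => ‖z‖ ^ ((6 : ℝ) + δ)) ν)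
    (B : ∀ n, Matrix (Fin (p n)) (Fin (m n)) ℂ)
    (bcol : ∀ n, Fin (m n) → ℝ)
    (hbcol : ∀ n j, bcol n j = Real.sqrt (∑ l, ‖B n l j‖ ^ 2))
    (C₁ C₂ : ℝ)
    (hb1 : ∀ n j, bcol n j ≤ C₁)
    (hb2 : ∀ n, ∑ k, bcol n k ^ 2 ≤ C₂ * p n)
    (Xh : ∀ n, Ω → Matrix (Fin (m n)) (Fin n) ℂ)
    (hXh : ∀ n ω j k, Xh n ω j k =
      if ‖X n ω j k‖ * bcol n j ≤ (n : ℝ) ^ ((1 : ℝ) / 2 - η) then X n ω j k else 0)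
    (EXh : ∀ n, Matrix (Fin (m n)) (Fin n) ℂ)
    (hEXh : ∀ n j k, EXh n j k = ∫ ω, Xh n ω j k ∂μ)
    (S1 S2 : ∀ n, Ω → Matrix (Fin (p n)) (Fin (p n)) ℂ)
    (hS1 : ∀ n ω, S1 n ω = (n : ℂ)⁻¹ • (B n * Xh n ω * (Xh n ω)ᴴ * (B n)ᴴ))
    (hS2 : ∀ n ω, S2 n ω =
      (n : ℂ)⁻¹ • (B n * (Xh n ω - EXh n) * (Xh n ω - EXh n)ᴴ * (B n)ᴴ))
    (hS1herm : ∀ n ω, (S1 n ω).IsHermitian)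
    (hS2herm : ∀ n ω, (S2 n ω).IsHermitian) :
    ∃ C : ℝ, 0 < C ∧ ∀ n : ℕ, 0 < n → ∀ (ω : Ω) (k : Fin (p n)),
      |Real.sqrt (kthLargest (hS1herm n ω) k) - Real.sqrt (kthLargest (hS2herm n ω) k)|
        ≤ C * (n : ℝ) ^ (-(3 : ℝ) / 2) := by
  classical
  have hμ₆ : 0 ≤ μ₆ := by
    rw [← hmom]; exact integral_nonneg fun z => Real.rpow_nonneg (norm_nonneg _) _
  obtain ⟨N, hN⟩ := Filter.eventually_atTop.mp (hcn.eventually_lt_const (by linarith : c < c + 1))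
  set K : ℝ := c + 1 + ∑ i ∈ Finset.range N, (p i : ℝ) with hKdef
  have hsumnn : 0 ≤ ∑ i ∈ Finset.range N, (p i : ℝ) :=
    Finset.sum_nonneg fun i _ => Nat.cast_nonneg _
  have hK0 : 0 ≤ K := by rw [hKdef]; linarith
  have hKp : ∀ n : ℕ, 0 < n → (p n : ℝ) ≤ K * n := by
    intro n hn
    have hn1 : (1:ℝ) ≤ (n:ℝ) := by exact_mod_cast hn
    rcases le_or_gt N n with hNn | hNn
    · have hlt := hN n hNn
      rw [div_lt_iff₀ (by linarith : (0:ℝ) < n)] at hlt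
      calc (p n : ℝ) ≤ (c + 1) * n := hlt.le
        _ ≤ K * n := mul_le_mul_of_nonneg_right (by rw [hKdef]; linarith) (by linarith)
    · have hmem : (p n : ℝ) ≤ ∑ i ∈ Finset.range N, (p i : ℝ) :=
        Finset.single_le_sum (f := fun i => (p i : ℝ)) (fun i _ => Nat.cast_nonneg _)
          (Finset.mem_range.mpr hNn)
      calc (p n : ℝ) ≤ ∑ i ∈ Finset.range N, (p i : ℝ) := hmem
        _ ≤ K := by rw [hKdef]; linarith
        _ ≤ K * n := le_mul_of_one_le_right hK0 hn1
  have hC₁ : (0:ℝ) ≤ |C₁| ^ ((4:ℝ) + δ) := Real.rpow_nonneg (abs_nonneg _) _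
  set D : ℝ := μ₆ * |C₁| ^ ((4:ℝ) + δ) * |C₂| * K with hDdef
  have hD0 : 0 ≤ D :=
    mul_nonneg (mul_nonneg (mul_nonneg hμ₆ hC₁) (abs_nonneg _)) hK0
  refine ⟨D + 1, by linarith, fun n hn ω k => ?_⟩
  have hn1 : (1:ℝ) ≤ (n:ℝ) := by exact_mod_cast hn
  have hnpos : (0:ℝ) < (n:ℝ) := by linarith
  set t : ℝ := (n:ℝ) ^ ((1:ℝ)/2 - η) with htdef
  have ht : 0 < t := Real.rpow_pos_of_pos hnpos _
  have hbnn : ∀ j, 0 ≤ bcol n j := fun j => (hbcol n j) ▸ Real.sqrt_nonneg _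
  set β : ℝ := (5:ℝ) + δ with hβdef
  have hβ0 : (0:ℝ) ≤ β := by rw [hβdef]; linarith
  have htβ0 : (0:ℝ) < t ^ β := Real.rpow_pos_of_pos ht _
  -- entrywise bound on EXh
  have hentry : ∀ (j : Fin (m n)) (kk : Fin n),
      ‖EXh n j kk‖ ≤ μ₆ * (bcol n j / t) ^ β := by
    intro j kk
    rw [hEXh n j kk]
    have h1 : (∫ ω, Xh n ω j kk ∂μ)
        = ∫ ω, (fun z : ℂ => if ‖z‖ * bcol n j ≤ t then z else 0) (X n ω j kk) ∂μ :=
      integral_congr_ae (Filter.Eventually.of_forall fun ω => hXh n ω j kk)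
    have hset : MeasurableSet {z : ℂ | ‖z‖ * bcol n j ≤ t} :=
      measurableSet_le ((continuous_norm.mul continuous_const).measurable) measurable_const
    have hfmeas : Measurable fun z : ℂ => if ‖z‖ * bcol n j ≤ t then z else 0 :=
      Measurable.ite hset measurable_id measurable_const
    rw [h1, ← integral_map (hXmeas n j kk).aemeasurable hfmeas.aestronglyMeasurable,
      hXlaw n j kk]
    exact CentralAux.trunc_mean_bound ν hmean δ hδ0 μ₆ hmom hmomint _ t (hbnn j) ht
  -- column-sum bound
  set Sb : ℝ := μ₆ * |C₁| ^ ((4:ℝ) + δ) * |C₂| * (p n : ℝ) / t ^ β with hSbdef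
  have hSb0 : 0 ≤ Sb := by
    rw [hSbdef]
    exact div_nonneg
      (mul_nonneg (mul_nonneg (mul_nonneg hμ₆ hC₁) (abs_nonneg _)) (Nat.cast_nonneg _)) htβ0.le
  have hcolsum : ∀ kk : Fin n, ∑ j, ‖EXh n j kk‖ * bcol n j ≤ Sb := by
    intro kk
    have hterm : ∀ j, ‖EXh n j kk‖ * bcol n j
        ≤ μ₆ * |C₁| ^ ((4:ℝ) + δ) / t ^ β * (bcol n j * bcol n j) := by
      intro j
      have h2 : (bcol n j / t) ^ β = bcol n j ^ β / t ^ β := Real.div_rpow (hbnn j) ht.le β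
      have h3 : bcol n j ^ β = bcol n j ^ ((4:ℝ) + δ) * bcol n j := by
        rw [hβdef, show (5:ℝ) + δ = ((4:ℝ) + δ) + 1 by ring,
          Real.rpow_add' (hbnn j) (by linarith), Real.rpow_one]
      have h4 : bcol n j ^ ((4:ℝ) + δ) ≤ |C₁| ^ ((4:ℝ) + δ) :=
        Real.rpow_le_rpow (hbnn j) ((hb1 n j).trans (le_abs_self _)) (by linarith)
      calc ‖EXh n j kk‖ * bcol n j
          ≤ (μ₆ * (bcol n j / t) ^ β) * bcol n j :=
            mul_le_mul_of_nonneg_right (hentry j kk) (hbnn j)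
        _ = μ₆ / t ^ β * (bcol n j ^ ((4:ℝ) + δ) * (bcol n j * bcol n j)) := by
            rw [h2, h3]; ring
        _ ≤ μ₆ / t ^ β * (|C₁| ^ ((4:ℝ) + δ) * (bcol n j * bcol n j)) := by
            refine mul_le_mul_of_nonneg_left ?_ (div_nonneg hμ₆ htβ0.le)
            exact mul_le_mul_of_nonneg_right h4 (mul_nonneg (hbnn j) (hbnn j))
        _ = μ₆ * |C₁| ^ ((4:ℝ) + δ) / t ^ β * (bcol n j * bcol n j) := by ring
    calc ∑ j, ‖EXh n j kk‖ * bcol n j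
        ≤ ∑ j, μ₆ * |C₁| ^ ((4:ℝ) + δ) / t ^ β * (bcol n j * bcol n j) :=
          Finset.sum_le_sum fun j _ => hterm j
      _ = μ₆ * |C₁| ^ ((4:ℝ) + δ) / t ^ β * ∑ j, bcol n j ^ 2 := by
          rw [Finset.mul_sum]; exact Finset.sum_congr rfl fun j _ => by ring
      _ ≤ μ₆ * |C₁| ^ ((4:ℝ) + δ) / t ^ β * (|C₂| * (p n : ℝ)) := by
          refine mul_le_mul_of_nonneg_left ?_ (div_nonneg (mul_nonneg hμ₆ hC₁) htβ0.le)
          exact (hb2 n).trans (mul_le_mul_of_nonneg_right (le_abs_self _) (Nat.cast_nonneg _))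
      _ = Sb := by rw [hSbdef]; ring
  -- Frobenius bound for B * EXh
  set M : Matrix (Fin (p n)) (Fin n) ℂ := B n * EXh n with hMdef
  have hcol2 : ∀ kk : Fin n, ∑ l, ‖M l kk‖ ^ 2 ≤ Sb ^ 2 := by
    intro kk
    set v : EuclideanSpace ℂ (Fin (p n)) := (WithLp.equiv 2 _).symm (fun l => M l kk) with hvdef
    have hvapp : ∀ l, v l = M l kk := fun l => rfl
    have hvnorm : ∑ l, ‖M l kk‖ ^ 2 = ‖v‖ ^ 2 := by
      rw [EuclideanSpace.norm_eq, Real.sq_sqrt (Finset.sum_nonneg fun _ _ => sq_nonneg _)]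
      exact Finset.sum_congr rfl fun l _ => by rw [hvapp]
    have hvsum : v = ∑ j, (WithLp.equiv 2 (Fin (p n) → ℂ)).symm
        (fun l => B n l j * EXh n j kk) := by
      have h1 : (fun l => M l kk) = ∑ j, (fun l => B n l j * EXh n j kk) := by
        funext l
        rw [Finset.sum_apply]
        rw [hMdef, Matrix.mul_apply]
      calc v = (WithLp.linearEquiv 2 ℂ (Fin (p n) → ℂ)).symm (fun l => M l kk) := rfl
        _ = (WithLp.linearEquiv 2 ℂ (Fin (p n) → ℂ)).symm
            (∑ j, fun l => B n l j * EXh n j kk) := by rw [h1]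
        _ = ∑ j, (WithLp.linearEquiv 2 ℂ (Fin (p n) → ℂ)).symm
            (fun l => B n l j * EXh n j kk) := map_sum _ _ _
        _ = ∑ j, (WithLp.equiv 2 (Fin (p n) → ℂ)).symm
            (fun l => B n l j * EXh n j kk) := rfl
    have hvle : ‖v‖ ≤ Sb := by
      rw [hvsum]
      refine (norm_sum_le _ _).trans ((Finset.sum_le_sum fun j _ => ?_).trans (hcolsum kk))
      show ‖(WithLp.equiv 2 (Fin (p n) → ℂ)).symm (fun l => B n l j * EXh n j kk)‖
        ≤ ‖EXh n j kk‖ * bcol n j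
      rw [EuclideanSpace.norm_eq]
      refine le_of_eq ?_
      have hsq : ∀ l : Fin (p n),
          ‖B n l j * EXh n j kk‖ ^ 2 = ‖B n l j‖ ^ 2 * ‖EXh n j kk‖ ^ 2 := by
        intro l; rw [norm_mul, mul_pow]
      calc Real.sqrt (∑ l, ‖B n l j * EXh n j kk‖ ^ 2)
          = Real.sqrt ((∑ l, ‖B n l j‖ ^ 2) * ‖EXh n j kk‖ ^ 2) := by
            rw [Finset.sum_mul]; exact congrArg _ (Finset.sum_congr rfl fun l _ => hsq l)
        _ = Real.sqrt (∑ l, ‖B n l j‖ ^ 2) * ‖EXh n j kk‖ := by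
            rw [Real.sqrt_mul (Finset.sum_nonneg fun _ _ => sq_nonneg _),
              Real.sqrt_sq (norm_nonneg _)]
        _ = ‖EXh n j kk‖ * bcol n j := by rw [hbcol n j, mul_comm]
    calc ∑ l, ‖M l kk‖ ^ 2 = ‖v‖ ^ 2 := hvnorm
      _ ≤ Sb ^ 2 := by nlinarith [norm_nonneg v]
  have hFrob : ∑ kk : Fin n, ∑ l, ‖M l kk‖ ^ 2 ≤ (Real.sqrt n * Sb) ^ 2 := by
    calc ∑ kk : Fin n, ∑ l, ‖M l kk‖ ^ 2 ≤ ∑ _kk : Fin n, Sb ^ 2 :=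
          Finset.sum_le_sum fun kk _ => hcol2 kk
      _ = (n : ℝ) * Sb ^ 2 := by rw [Finset.sum_const, Finset.card_univ, Fintype.card_fin,
            nsmul_eq_mul]
      _ = (Real.sqrt n * Sb) ^ 2 := by rw [mul_pow, Real.sq_sqrt hnpos.le]
  -- set up the matrices
  set r : ℂ := ((Real.sqrt n : ℝ) : ℂ)⁻¹ with hrdef
  set A₁ : Matrix (Fin (p n)) (Fin n) ℂ := r • (B n * Xh n ω) with hA₁def
  set A₂ : Matrix (Fin (p n)) (Fin n) ℂ := r • (B n * (Xh n ω - EXh n)) with hA₂def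
  have hsqrtpos : (0:ℝ) < Real.sqrt n := Real.sqrt_pos.mpr hnpos
  have hstarr : star r = r := by
    rw [hrdef, star_inv₀, Complex.star_def, Complex.conj_ofReal]
  have hrr : r * star r = (n:ℂ)⁻¹ := by
    rw [hstarr, hrdef, ← mul_inv, ← Complex.ofReal_mul, Real.mul_self_sqrt hnpos.le,
      Complex.ofReal_natCast]
  have hS1eq : S1 n ω = A₁ * A₁ᴴ := by
    rw [hS1 n ω, hA₁def]
    rw [Matrix.conjTranspose_smul, Matrix.smul_mul, Matrix.mul_smul, smul_smul, hrr]
    congr 1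
    rw [Matrix.conjTranspose_mul, Matrix.mul_assoc]
  have hS2eq : S2 n ω = A₂ * A₂ᴴ := by
    rw [hS2 n ω, hA₂def]
    rw [Matrix.conjTranspose_smul, Matrix.smul_mul, Matrix.mul_smul, smul_smul, hrr]
    congr 1
    rw [Matrix.conjTranspose_mul, Matrix.mul_assoc]
  have hdiff : A₁ - A₂ = r • M := by
    rw [hA₁def, hA₂def, ← smul_sub, Matrix.mul_sub, sub_sub_cancel, hMdef]
  have hE : ∀ x : EuclideanSpace ℂ (Fin (p n)),
      ‖Matrix.toEuclideanLin (A₁ - A₂)ᴴ x‖ ≤ Sb * ‖x‖ := by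
    intro x
    rw [hdiff, Matrix.conjTranspose_smul, _root_.map_smul, LinearMap.smul_apply, norm_smul,
      hstarr]
    have hnr : ‖r‖ = (Real.sqrt n)⁻¹ := by
      rw [hrdef, norm_inv, Complex.norm_real, Real.norm_eq_abs,
        abs_of_nonneg (Real.sqrt_nonneg _)]
    rw [hnr]
    have hble := CentralAux.mulVec_conjTranspose_norm_le M (Real.sqrt n * Sb)
      (mul_nonneg (Real.sqrt_nonneg _) hSb0) hFrob x
    calc (Real.sqrt n)⁻¹ * ‖Matrix.toEuclideanLin Mᴴ x‖
        ≤ (Real.sqrt n)⁻¹ * (Real.sqrt n * Sb * ‖x‖) :=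
          mul_le_mul_of_nonneg_left hble (inv_nonneg.mpr (Real.sqrt_nonneg _))
      _ = Sb * ‖x‖ := by
          rw [← mul_assoc, ← mul_assoc, inv_mul_cancel₀ (ne_of_gt hsqrtpos), one_mul]
  have hweyl := CentralAux.weyl (Matrix.isHermitian_mul_conjTranspose_self A₁)
    (Matrix.isHermitian_mul_conjTranspose_self A₂) k Sb hE
  rw [CentralAux.kthLargest_congr hS1eq (hS1herm n ω)
      (Matrix.isHermitian_mul_conjTranspose_self A₁) k,
    CentralAux.kthLargest_congr hS2eq (hS2herm n ω)
      (Matrix.isHermitian_mul_conjTranspose_self A₂) k]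
  refine hweyl.trans ?_
  -- final arithmetic: Sb ≤ D * n^{-3/2} ≤ (D+1) * n^{-3/2}
  have h6 : (0:ℝ) < 6 + δ := by linarith
  have hexp : (1:ℝ) - ((1:ℝ)/2 - η) * β ≤ -(3:ℝ)/2 := by
    have hη' : η * (5 + δ) ≤ δ / 2 := by
      rw [hη, div_div, div_mul_eq_mul_div, div_le_div_iff₀ (by positivity) two_pos]
      nlinarith [hδ0.le]
    rw [hβdef]
    nlinarith [hη']
  have htβ : t ^ β = (n:ℝ) ^ (((1:ℝ)/2 - η) * β) := by
    rw [htdef, ← Real.rpow_mul hnpos.le]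
  have hSble : Sb ≤ D * (n:ℝ) ^ (-(3:ℝ)/2) := by
    have hpn := hKp n hn
    have hstep1 : Sb ≤ μ₆ * |C₁| ^ ((4:ℝ) + δ) * |C₂| * K
        * ((n:ℝ) * ((n:ℝ) ^ (((1:ℝ)/2 - η) * β))⁻¹) := by
      rw [hSbdef, htβ, div_eq_mul_inv]
      calc μ₆ * |C₁| ^ ((4:ℝ) + δ) * |C₂| * (p n : ℝ) * ((n:ℝ) ^ (((1:ℝ)/2 - η) * β))⁻¹
          ≤ μ₆ * |C₁| ^ ((4:ℝ) + δ) * |C₂| * (K * n) * ((n:ℝ) ^ (((1:ℝ)/2 - η) * β))⁻¹ := by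
            refine mul_le_mul_of_nonneg_right ?_
              (inv_nonneg.mpr (Real.rpow_nonneg hnpos.le _))
            exact mul_le_mul_of_nonneg_left hpn (mul_nonneg (mul_nonneg hμ₆ hC₁) (abs_nonneg _))
        _ = μ₆ * |C₁| ^ ((4:ℝ) + δ) * |C₂| * K
            * ((n:ℝ) * ((n:ℝ) ^ (((1:ℝ)/2 - η) * β))⁻¹) := by ring
    have hstep2 : (n:ℝ) * ((n:ℝ) ^ (((1:ℝ)/2 - η) * β))⁻¹
        = (n:ℝ) ^ ((1:ℝ) - ((1:ℝ)/2 - η) * β) := by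
      rw [Real.rpow_sub hnpos, Real.rpow_one]
      ring
    have hstep3 : (n:ℝ) ^ ((1:ℝ) - ((1:ℝ)/2 - η) * β) ≤ (n:ℝ) ^ (-(3:ℝ)/2) :=
      Real.rpow_le_rpow_of_exponent_le hn1 hexp
    calc Sb ≤ μ₆ * |C₁| ^ ((4:ℝ) + δ) * |C₂| * K
        * ((n:ℝ) ^ ((1:ℝ) - ((1:ℝ)/2 - η) * β)) := by rw [← hstep2]; exact hstep1
      _ ≤ μ₆ * |C₁| ^ ((4:ℝ) + δ) * |C₂| * K * ((n:ℝ) ^ (-(3:ℝ)/2)) := by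
          refine mul_le_mul_of_nonneg_left hstep3 ?_
          exact mul_nonneg (mul_nonneg (mul_nonneg hμ₆ hC₁) (abs_nonneg _)) hK0
      _ = D * (n:ℝ) ^ (-(3:ℝ)/2) := by rw [hDdef]
  refine hSble.trans ?_
  have hrpow : (0:ℝ) < (n:ℝ) ^ (-(3:ℝ)/2) := Real.rpow_pos_of_pos hnpos _
  nlinarith
end

section
/- Let x be a complex random variable with E x = 0, E|x|² = 1 and E|x|^{6+δ} ≤ μ for some 0<δ<1, let b > 0, and set hat-x = x·1(|x| ≤ n^{1/2−η}/b) with η = (δ/6)/(6+δ) and σ² = E| hat-x − E hat-x |². Then 1 − σ² ≤ 2 μ b^{4+δ} / n² ; moreover | E hat-x | ≤ b^{5+δ} n^{−5/2−δ/3} E|x|^{6+δ} ≤ C b n^{−5/2} whenever b is bounded by a fixed constant. -/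
set_option maxHeartbeats 1000000

open MeasureTheory Filter Set
open scoped Topology

theorem trunc_aux
    {Ω : Type*} [MeasurableSpace Ω] (μ : Measure Ω) [IsProbabilityMeasure μ]
    (δ : ℝ) (hδ0 : 0 < δ) (hδ1 : δ < 1)
    (η : ℝ) (hη : η = δ / 6 / (6 + δ))
    (x : Ω → ℂ) (hxmeas : Measurable x)
    (hmean : ∫ ω, x ω ∂μ = 0) (hvar : ∫ ω, ‖x ω‖ ^ 2 ∂μ = 1)
    (μ₆ : ℝ) (hmom : ∫ ω, ‖x ω‖ ^ ((6 : ℝ) + δ) ∂μ ≤ μ₆)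
    (hmomint : Integrable (fun ω => ‖x ω‖ ^ ((6 : ℝ) + δ)) μ)
    (n : ℕ) (hn : 0 < n) (b : ℝ) (hb : 0 < b) (xh : Ω → ℂ)
    (hxh : ∀ ω, xh ω = if ‖x ω‖ * b ≤ (n : ℝ) ^ ((1 : ℝ) / 2 - η) then x ω else 0) :
    (1 - ∫ ω, ‖xh ω - ∫ ω', xh ω' ∂μ‖ ^ 2 ∂μ
        ≤ 2 * μ₆ * b ^ ((4 : ℝ) + δ) / (n : ℝ) ^ 2) ∧
    ‖∫ ω, xh ω ∂μ‖ ≤ b ^ ((5 : ℝ) + δ) * (n : ℝ) ^ (-(5 : ℝ) / 2 - δ / 3) *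
      ∫ ω, ‖x ω‖ ^ ((6 : ℝ) + δ) ∂μ := by
  have hN0 : (0:ℝ) < (n:ℝ) := by exact_mod_cast hn
  have hN1 : (1:ℝ) ≤ (n:ℝ) := by exact_mod_cast hn
  have h6δ : (0:ℝ) < 6 + δ := by linarith
  have hNpow : (0:ℝ) < (n : ℝ) ^ ((1 : ℝ) / 2 - η) := Real.rpow_pos_of_pos hN0 _
  set T : ℝ := (n : ℝ) ^ ((1 : ℝ) / 2 - η) / b with hTdef
  have hT : 0 < T := div_pos hNpow hb
  have hxh' : ∀ ω, xh ω = if ‖x ω‖ ≤ T then x ω else 0 := by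
    intro ω
    rw [hxh ω]
    by_cases h : ‖x ω‖ * b ≤ (n : ℝ) ^ ((1 : ℝ) / 2 - η)
    · rw [if_pos h, if_pos ((le_div_iff₀ hb).2 h)]
    · rw [if_neg h, if_neg fun hc => h ((le_div_iff₀ hb).1 hc)]
  have hxhmeas : Measurable xh := by
    have hfun : xh = fun ω => if ‖x ω‖ ≤ T then x ω else 0 := funext hxh'
    rw [hfun]
    exact Measurable.ite (measurableSet_le hxmeas.norm measurable_const) hxmeas measurable_const
  -- integrability
  have hx2int : Integrable (fun ω => ‖x ω‖ ^ 2) μ := by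
    by_contra h
    rw [integral_undef h] at hvar
    norm_num at hvar
  have hxint : Integrable x μ := by
    have h1 : Integrable (fun ω => (1 + ‖x ω‖ ^ 2) / 2) μ :=
      ((integrable_const (1:ℝ)).add hx2int).div_const 2
    refine h1.mono' hxmeas.aestronglyMeasurable (ae_of_all _ fun ω => ?_)
    nlinarith [sq_nonneg (‖x ω‖ - 1), norm_nonneg (x ω)]
  have hxhle : ∀ ω, ‖xh ω‖ ≤ ‖x ω‖ := by
    intro ω; rw [hxh' ω]; split <;> simp
  have hxhint : Integrable xh μ := by
    refine hxint.norm.mono' hxhmeas.aestronglyMeasurable (ae_of_all _ fun ω => ?_)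
    simpa using hxhle ω
  set d : Ω → ℂ := fun ω => x ω - xh ω with hddef
  have hdint : Integrable d μ := hxint.sub hxhint
  have hdmeas : Measurable d := hxmeas.sub hxhmeas
  have hd0 : ∀ ω, d ω = if ‖x ω‖ ≤ T then 0 else x ω := by
    intro ω
    simp only [hddef, hxh' ω]
    split <;> simp
  -- pointwise key bounds
  have key1 : ∀ ω, ‖d ω‖ * T ^ ((5:ℝ) + δ) ≤ ‖x ω‖ ^ ((6:ℝ) + δ) := by
    intro ω
    rw [hd0 ω]
    split
    · simp only [norm_zero, zero_mul]
      positivity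
    · next h =>
      push_neg at h
      have hx0 : 0 < ‖x ω‖ := hT.trans h
      have h5 : T ^ ((5:ℝ) + δ) ≤ ‖x ω‖ ^ ((5:ℝ) + δ) :=
        Real.rpow_le_rpow hT.le h.le (by linarith)
      calc ‖x ω‖ * T ^ ((5:ℝ) + δ) ≤ ‖x ω‖ * ‖x ω‖ ^ ((5:ℝ) + δ) := by
            exact mul_le_mul_of_nonneg_left h5 (norm_nonneg _)
        _ = ‖x ω‖ ^ ((6:ℝ) + δ) := by
            rw [show (6:ℝ) + δ = 1 + ((5:ℝ) + δ) by ring, Real.rpow_add hx0 1 ((5:ℝ)+δ), Real.rpow_one]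
  have key2 : ∀ ω, ‖d ω‖ ^ 2 * T ^ ((4:ℝ) + δ) ≤ ‖x ω‖ ^ ((6:ℝ) + δ) := by
    intro ω
    rw [hd0 ω]
    split
    · simp only [norm_zero]
      rw [show ((0:ℝ)) ^ 2 * T ^ ((4:ℝ) + δ) = 0 by ring]
      positivity
    · next h =>
      push_neg at h
      have hx0 : 0 < ‖x ω‖ := hT.trans h
      have h4 : T ^ ((4:ℝ) + δ) ≤ ‖x ω‖ ^ ((4:ℝ) + δ) :=
        Real.rpow_le_rpow hT.le h.le (by linarith)
      calc ‖x ω‖ ^ 2 * T ^ ((4:ℝ) + δ) ≤ ‖x ω‖ ^ 2 * ‖x ω‖ ^ ((4:ℝ) + δ) := by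
            exact mul_le_mul_of_nonneg_left h4 (by positivity)
        _ = ‖x ω‖ ^ ((6:ℝ) + δ) := by
            rw [show (6:ℝ) + δ = 2 + ((4:ℝ) + δ) by ring, Real.rpow_add hx0 2 ((4:ℝ)+δ), Real.rpow_two]
  set I₆ : ℝ := ∫ ω, ‖x ω‖ ^ ((6:ℝ) + δ) ∂μ with hI₆def
  have hI₆nonneg : 0 ≤ I₆ := integral_nonneg fun ω => Real.rpow_nonneg (norm_nonneg _) _
  have hμ₆nonneg : 0 ≤ μ₆ := hI₆nonneg.trans hmom
  have hT5 : (0:ℝ) < T ^ ((5:ℝ) + δ) := Real.rpow_pos_of_pos hT _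
  have hT4 : (0:ℝ) < T ^ ((4:ℝ) + δ) := Real.rpow_pos_of_pos hT _
  have hI1 : ∫ ω, ‖d ω‖ ∂μ ≤ I₆ / T ^ ((5:ℝ) + δ) := by
    calc ∫ ω, ‖d ω‖ ∂μ ≤ ∫ ω, ‖x ω‖ ^ ((6:ℝ) + δ) / T ^ ((5:ℝ) + δ) ∂μ := by
          refine integral_mono hdint.norm (hmomint.div_const _) fun ω => ?_
          exact (le_div_iff₀ hT5).2 (key1 ω)
      _ = I₆ / T ^ ((5:ℝ) + δ) := integral_div _ _
  have hI2 : ∫ ω, ‖d ω‖ ^ 2 ∂μ ≤ I₆ / T ^ ((4:ℝ) + δ) := by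
    have hd2int : Integrable (fun ω => ‖d ω‖ ^ 2) μ := by
      refine hx2int.mono' ((hdmeas.norm.pow_const 2).aestronglyMeasurable)
        (ae_of_all _ fun ω => ?_)
      rw [Real.norm_eq_abs, abs_of_nonneg (by positivity)]
      have : ‖d ω‖ ≤ ‖x ω‖ := by
        rw [hd0 ω]; split <;> simp
      exact pow_le_pow_left₀ (norm_nonneg _) this 2
    calc ∫ ω, ‖d ω‖ ^ 2 ∂μ ≤ ∫ ω, ‖x ω‖ ^ ((6:ℝ) + δ) / T ^ ((4:ℝ) + δ) ∂μ := by
          refine integral_mono hd2int (hmomint.div_const _) fun ω => ?_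
          exact (le_div_iff₀ hT4).2 (key2 ω)
      _ = I₆ / T ^ ((4:ℝ) + δ) := integral_div _ _
  have hxh2int : Integrable (fun ω => ‖xh ω‖ ^ 2) μ := by
    refine hx2int.mono' ((hxhmeas.norm.pow_const 2).aestronglyMeasurable) (ae_of_all _ fun ω => ?_)
    rw [Real.norm_eq_abs, abs_of_nonneg (by positivity)]
    exact pow_le_pow_left₀ (norm_nonneg _) (hxhle ω) 2
  have hd2int : Integrable (fun ω => ‖d ω‖ ^ 2) μ := by
    refine hx2int.mono' ((hdmeas.norm.pow_const 2).aestronglyMeasurable) (ae_of_all _ fun ω => ?_)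
    rw [Real.norm_eq_abs, abs_of_nonneg (by positivity)]
    refine pow_le_pow_left₀ (norm_nonneg _) ?_ 2
    rw [hd0 ω]; split <;> simp
  -- mean representation
  set m : ℂ := ∫ ω, xh ω ∂μ with hmdef
  have hmd : ∫ ω, d ω ∂μ = -m := by
    rw [hddef]
    rw [integral_sub hxint hxhint, hmean, ← hmdef, zero_sub]
  have hm_le : ‖m‖ ≤ ∫ ω, ‖d ω‖ ∂μ := by
    have h := norm_integral_le_integral_norm (μ := μ) d
    rw [hmd, norm_neg] at h
    exact h
  have hTpow : ∀ c : ℝ, T ^ c = (n:ℝ) ^ (((1:ℝ)/2 - η) * c) / b ^ c := by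
    intro c
    rw [hTdef, Real.div_rpow (Real.rpow_nonneg hN0.le _) hb.le, ← Real.rpow_mul hN0.le]
  have hb5 : (0:ℝ) < b ^ ((5:ℝ) + δ) := Real.rpow_pos_of_pos hb _
  have hb4 : (0:ℝ) < b ^ ((4:ℝ) + δ) := Real.rpow_pos_of_pos hb _
  have hmean_bound : ‖m‖ ≤ b ^ ((5:ℝ) + δ) * (n:ℝ) ^ (-(5:ℝ)/2 - δ/3) * I₆ := by
    have h1 : I₆ / T ^ ((5:ℝ)+δ) = b ^ ((5:ℝ)+δ) * (n:ℝ) ^ (-(((1:ℝ)/2 - η) * ((5:ℝ)+δ))) * I₆ := by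
      rw [hTpow ((5:ℝ)+δ), Real.rpow_neg hN0.le]
      have hnp : (0:ℝ) < (n:ℝ) ^ (((1:ℝ)/2 - η) * ((5:ℝ)+δ)) := Real.rpow_pos_of_pos hN0 _
      field_simp
    have h2 : (n:ℝ) ^ (-(((1:ℝ)/2 - η) * ((5:ℝ)+δ))) ≤ (n:ℝ) ^ (-(5:ℝ)/2 - δ/3) := by
      apply Real.rpow_le_rpow_of_exponent_le hN1
      have h6ne : (6:ℝ) + δ ≠ 0 := ne_of_gt h6δ
      have key : ((1:ℝ)/2 - δ / 6 / (6 + δ)) * ((5:ℝ)+δ) - ((5:ℝ)/2 + δ/3) = δ / (6 * (6+δ)) := by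
        field_simp
        ring
      rw [hη]
      have hnn : (0:ℝ) ≤ δ / (6 * (6+δ)) := div_nonneg hδ0.le (by linarith)
      linarith [key]
    calc ‖m‖ ≤ I₆ / T ^ ((5:ℝ)+δ) := hm_le.trans hI1
      _ = b ^ ((5:ℝ)+δ) * (n:ℝ) ^ (-(((1:ℝ)/2 - η) * ((5:ℝ)+δ))) * I₆ := h1
      _ ≤ b ^ ((5:ℝ)+δ) * (n:ℝ) ^ (-(5:ℝ)/2 - δ/3) * I₆ :=
          mul_le_mul_of_nonneg_right (mul_le_mul_of_nonneg_left h2 hb5.le) hI₆nonneg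
  -- variance identity
  have hsplit : ∀ ω, ‖x ω‖ ^ 2 = ‖xh ω‖ ^ 2 + ‖d ω‖ ^ 2 := by
    intro ω
    rw [hxh' ω, hd0 ω]
    split <;> simp
  have hsum : (1:ℝ) = (∫ ω, ‖xh ω‖ ^ 2 ∂μ) + ∫ ω, ‖d ω‖ ^ 2 ∂μ := by
    rw [← hvar, ← integral_add hxh2int hd2int]
    exact integral_congr_ae (ae_of_all _ hsplit)
  have hexpand : ∀ ω, ‖xh ω - m‖ ^ 2
      = ‖xh ω‖ ^ 2 - 2 * ((xh ω).re * m.re + (xh ω).im * m.im) + ‖m‖ ^ 2 := by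
    intro ω
    simp only [Complex.sq_norm, Complex.normSq_apply, Complex.sub_re,
      Complex.sub_im]
    ring
  have hre_int : Integrable (fun ω => (xh ω).re) μ := by simpa using hxhint.re
  have him_int : Integrable (fun ω => (xh ω).im) μ := by simpa using hxhint.im
  have hre : ∫ ω, (xh ω).re ∂μ = m.re := by
    have := integral_re (μ := μ) hxhint
    simpa [hmdef] using this
  have him : ∫ ω, (xh ω).im ∂μ = m.im := by
    have := integral_im (μ := μ) hxhint
    simpa [hmdef] using this
  have hcross_int : Integrable (fun ω => 2 * ((xh ω).re * m.re + (xh ω).im * m.im)) μ :=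
    ((hre_int.mul_const m.re).add (him_int.mul_const m.im)).const_mul 2
  have hmsq : ‖m‖ ^ 2 = m.re * m.re + m.im * m.im := by
    simp [Complex.sq_norm, Complex.normSq_apply]
  have hσ : ∫ ω, ‖xh ω - m‖ ^ 2 ∂μ = (∫ ω, ‖xh ω‖ ^ 2 ∂μ) - ‖m‖ ^ 2 := by
    have h1 : ∫ ω, ‖xh ω - m‖ ^ 2 ∂μ
        = ∫ ω, (‖xh ω‖ ^ 2 - 2 * ((xh ω).re * m.re + (xh ω).im * m.im) + ‖m‖ ^ 2) ∂μ :=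
      integral_congr_ae (ae_of_all _ hexpand)
    have hint1 : Integrable (fun ω => ‖xh ω‖ ^ 2 - 2 * ((xh ω).re * m.re + (xh ω).im * m.im)) μ :=
      hxh2int.sub hcross_int
    rw [h1, integral_add hint1 (integrable_const _),
      integral_sub hxh2int hcross_int, integral_const, probReal_univ]
    simp only [ENNReal.toReal_one, smul_eq_mul, one_mul]
    rw [integral_const_mul, integral_add (hre_int.mul_const _) (him_int.mul_const _),
      integral_mul_const, integral_mul_const, hre, him, hmsq]
    ring
  -- Cauchy–Schwarz via variance nonnegativity
  have hmemLp : MemLp (fun ω => ‖d ω‖) 2 μ := by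
    exact (memLp_two_iff_integrable_sq hdmeas.norm.aestronglyMeasurable).2 hd2int
  have hCS : (∫ ω, ‖d ω‖ ∂μ) ^ 2 ≤ ∫ ω, ‖d ω‖ ^ 2 ∂μ := by
    have h0 := ProbabilityTheory.variance_nonneg (fun ω => ‖d ω‖) μ
    rw [ProbabilityTheory.variance_eq_sub hmemLp] at h0
    simp only [Pi.pow_apply] at h0
    linarith
  have hm2 : ‖m‖ ^ 2 ≤ ∫ ω, ‖d ω‖ ^ 2 ∂μ :=
    (pow_le_pow_left₀ (norm_nonneg m) hm_le 2).trans hCS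
  constructor
  · -- variance deficit bound
    have h1 : 1 - ∫ ω, ‖xh ω - m‖ ^ 2 ∂μ ≤ 2 * (I₆ / T ^ ((4:ℝ)+δ)) := by
      rw [hσ]
      linarith [hI2, hm2, hsum]
    have hden : ((n:ℝ)) ^ 2 ≤ (n:ℝ) ^ (((1:ℝ)/2 - η) * ((4:ℝ)+δ)) := by
      rw [← Real.rpow_two]
      apply Real.rpow_le_rpow_of_exponent_le hN1
      have h6ne : (6:ℝ) + δ ≠ 0 := ne_of_gt h6δ
      have key : ((1:ℝ)/2 - δ / 6 / (6 + δ)) * ((4:ℝ)+δ) - 2 = δ * (14 + 2*δ) / (6 * (6+δ)) := by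
        field_simp
        ring
      rw [hη]
      have hnn : (0:ℝ) ≤ δ * (14 + 2*δ) / (6 * (6+δ)) :=
        div_nonneg (by nlinarith) (by linarith)
      linarith [key]
    have h2 : I₆ / T ^ ((4:ℝ)+δ) ≤ μ₆ * b ^ ((4:ℝ)+δ) / (n:ℝ) ^ 2 := by
      rw [hTpow ((4:ℝ)+δ), div_div_eq_mul_div]
      exact div_le_div₀ (by positivity) (mul_le_mul_of_nonneg_right hmom hb4.le)
        (by positivity) hden
    calc 1 - ∫ ω, ‖xh ω - m‖ ^ 2 ∂μ ≤ 2 * (I₆ / T ^ ((4:ℝ)+δ)) := h1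
      _ ≤ 2 * (μ₆ * b ^ ((4:ℝ)+δ) / (n:ℝ) ^ 2) := by linarith [h2]
      _ = 2 * μ₆ * b ^ ((4:ℝ)+δ) / (n:ℝ) ^ 2 := by ring
  · exact hmean_bound

/-- **Variance deficit and mean bounds for a truncated variable.**  Let `x` be a complex
random variable with `E x = 0`, `E|x|² = 1` and `E|x|^{6+δ} ≤ μ₆`, let `b > 0` and
`x̂ = x·1(|x| ≤ n^{1/2-η}/b)` with `η = (δ/6)/(6+δ)`, and `σ² = E|x̂ - E x̂|²`.  Then
`1 - σ² ≤ 2 μ₆ b^{4+δ}/n²`, `|E x̂| ≤ b^{5+δ} n^{-5/2-δ/3} E|x|^{6+δ}`, and whenever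
`b ≤ C₁` also `|E x̂| ≤ C b n^{-5/2}` for a constant `C` not depending on `n` or `b`. -/
theorem truncated_variable_variance_and_mean_bounds
    {Ω : Type*} [MeasurableSpace Ω] (μ : Measure Ω) [IsProbabilityMeasure μ]
    (δ : ℝ) (hδ0 : 0 < δ) (hδ1 : δ < 1)
    (η : ℝ) (hη : η = δ / 6 / (6 + δ))
    (x : Ω → ℂ) (hxmeas : Measurable x)
    (hmean : ∫ ω, x ω ∂μ = 0) (hvar : ∫ ω, ‖x ω‖ ^ 2 ∂μ = 1)
    (μ₆ : ℝ) (hmom : ∫ ω, ‖x ω‖ ^ ((6 : ℝ) + δ) ∂μ ≤ μ₆)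
    (hmomint : Integrable (fun ω => ‖x ω‖ ^ ((6 : ℝ) + δ)) μ)
    (C₁ : ℝ) (hC₁ : 0 < C₁) :
    (∀ (n : ℕ), 0 < n → ∀ b : ℝ, 0 < b → ∀ xh : Ω → ℂ,
      (∀ ω, xh ω = if ‖x ω‖ * b ≤ (n : ℝ) ^ ((1 : ℝ) / 2 - η) then x ω else 0) →
        (1 - ∫ ω, ‖xh ω - ∫ ω', xh ω' ∂μ‖ ^ 2 ∂μ
            ≤ 2 * μ₆ * b ^ ((4 : ℝ) + δ) / (n : ℝ) ^ 2) ∧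
        ‖∫ ω, xh ω ∂μ‖ ≤ b ^ ((5 : ℝ) + δ) * (n : ℝ) ^ (-(5 : ℝ) / 2 - δ / 3) *
          ∫ ω, ‖x ω‖ ^ ((6 : ℝ) + δ) ∂μ) ∧
    (∃ C : ℝ, 0 < C ∧ ∀ (n : ℕ), 0 < n → ∀ b : ℝ, 0 < b → b ≤ C₁ → ∀ xh : Ω → ℂ,
      (∀ ω, xh ω = if ‖x ω‖ * b ≤ (n : ℝ) ^ ((1 : ℝ) / 2 - η) then x ω else 0) →
        ‖∫ ω, xh ω ∂μ‖ ≤ C * b * (n : ℝ) ^ (-(5 : ℝ) / 2)) := by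
  have hI₆ : (0:ℝ) ≤ ∫ ω, ‖x ω‖ ^ ((6:ℝ)+δ) ∂μ :=
    integral_nonneg fun ω => Real.rpow_nonneg (norm_nonneg _) _
  have hμ₆0 : 0 ≤ μ₆ := hI₆.trans hmom
  constructor
  · intro n hn b hb xh hxh
    exact trunc_aux μ δ hδ0 hδ1 η hη x hxmeas hmean hvar μ₆ hmom hmomint n hn b hb xh hxh
  · refine ⟨C₁ ^ ((4:ℝ) + δ) * μ₆ + 1, ?_, ?_⟩
    · have h1 : 0 ≤ C₁ ^ ((4:ℝ) + δ) * μ₆ :=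
        mul_nonneg (Real.rpow_nonneg hC₁.le _) hμ₆0
      linarith
    · intro n hn b hb hbC xh hxh
      have h := (trunc_aux μ δ hδ0 hδ1 η hη x hxmeas hmean hvar μ₆ hmom hmomint
        n hn b hb xh hxh).2
      have hN1 : (1:ℝ) ≤ (n:ℝ) := by exact_mod_cast hn
      have hb5 : b ^ ((5:ℝ)+δ) = b * b ^ ((4:ℝ)+δ) := by
        rw [show (5:ℝ)+δ = 1 + ((4:ℝ)+δ) by ring, Real.rpow_add hb 1 ((4:ℝ)+δ), Real.rpow_one]
      have hb4 : b ^ ((4:ℝ)+δ) ≤ C₁ ^ ((4:ℝ)+δ) := Real.rpow_le_rpow hb.le hbC (by linarith)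
      have hNe : (n:ℝ) ^ (-(5:ℝ)/2 - δ/3) ≤ (n:ℝ) ^ (-(5:ℝ)/2) :=
        Real.rpow_le_rpow_of_exponent_le hN1 (by linarith)
      have hNpos : (0:ℝ) ≤ (n:ℝ) ^ (-(5:ℝ)/2 - δ/3) := Real.rpow_nonneg (by positivity) _
      have hNpos2 : (0:ℝ) ≤ (n:ℝ) ^ (-(5:ℝ)/2) := Real.rpow_nonneg (by positivity) _
      have hC4 : (0:ℝ) ≤ C₁ ^ ((4:ℝ)+δ) := Real.rpow_nonneg hC₁.le _
      calc ‖∫ ω, xh ω ∂μ‖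
          ≤ b ^ ((5:ℝ)+δ) * (n:ℝ) ^ (-(5:ℝ)/2 - δ/3) * ∫ ω, ‖x ω‖ ^ ((6:ℝ)+δ) ∂μ := h
        _ ≤ b * C₁ ^ ((4:ℝ)+δ) * (n:ℝ) ^ (-(5:ℝ)/2) * μ₆ := by
            rw [hb5]
            apply mul_le_mul ?_ hmom hI₆ (by positivity)
            apply mul_le_mul ?_ hNe hNpos (by positivity)
            exact mul_le_mul_of_nonneg_left hb4 hb.le
        _ ≤ (C₁ ^ ((4:ℝ)+δ) * μ₆ + 1) * b * (n:ℝ) ^ (-(5:ℝ)/2) := by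
            nlinarith [mul_nonneg hb.le hNpos2]
end
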